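/- Nonemptiness of the Funk parabola of type 2: let y₀ ∈ (−1,1) and F = (f₀,g₀) ∈ B² with g₀ ≠ y₀, and let Q* = (f₀/ρ(g₀,y₀), y₀) be the point of the line s: y = y₀ realizing the Funk distance from F to s. Then there exists t₀ ∈ (0,1) such that the point P = F + t₀·(Q* − F) ∈ B² satisfies d_F(P,F) = d_F(P,Q*). -/

import Mathlib

set_option maxHeartbeats 1000000

/-- The Funk distance on the open unit ball of Euclidean n-space:
`d_F(P,Q) = ln((√k − ⟨P, Q−P⟩)/(√k − ⟨Q, Q−P⟩))` with
`k = ⟨P, Q−P⟩² + (1 − ‖P‖²)‖Q−P‖²`. -/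
noncomputable def funkDist {n : ℕ} (P Q : EuclideanSpace ℝ (Fin n)) : ℝ :=
  Real.log
    ((Real.sqrt ((inner ℝ P (Q - P) : ℝ) ^ 2 + (1 - ‖P‖ ^ 2) * ‖Q - P‖ ^ 2) - (inner ℝ P (Q - P) : ℝ)) /
     (Real.sqrt ((inner ℝ P (Q - P) : ℝ) ^ 2 + (1 - ‖P‖ ^ 2) * ‖Q - P‖ ^ 2) - (inner ℝ Q (Q - P) : ℝ)))

/-- `ρ(ε,η) = (1 + sgn(ε−η)·ε)/(1 + sgn(ε−η)·η)`. -/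
noncomputable def rho (ε η : ℝ) : ℝ :=
  (1 + Real.sign (ε - η) * ε) / (1 + Real.sign (ε - η) * η)

/-- The point `(a,b)` of the Euclidean plane. -/
def pt (a b : ℝ) : EuclideanSpace ℝ (Fin 2) := WithLp.toLp 2 ![a, b]

lemma norm_pt_sq (a b : ℝ) : ‖pt a b‖ ^ 2 = a ^ 2 + b ^ 2 := by
  rw [pt, EuclideanSpace.norm_eq, Real.sq_sqrt (by positivity)]
  simp [Fin.sum_univ_two, sq_abs]

/-- Key lemma: for any two distinct points `F`, `Q` of the open unit ball, some point
of the open segment from `F` to `Q` is Funk-equidistant from `F` and `Q`. -/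
lemma funk_key {n : ℕ} (F Q : EuclideanSpace ℝ (Fin n)) (hF : ‖F‖ < 1) (hQ : ‖Q‖ < 1)
    (hne : Q ≠ F) :
    ∃ t₀ : ℝ, 0 < t₀ ∧ t₀ < 1 ∧ ‖F + t₀ • (Q - F)‖ < 1 ∧
      funkDist (F + t₀ • (Q - F)) F = funkDist (F + t₀ • (Q - F)) Q := by
  set v : EuclideanSpace ℝ (Fin n) := Q - F with hv
  have hQF : Q = F + v := by rw [hv]; abel
  have hv0 : v ≠ 0 := sub_ne_zero.mpr hne
  set L : ℝ := ‖v‖ ^ 2 with hL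
  have hL0 : 0 < L := by
    have : 0 < ‖v‖ := norm_pos_iff.mpr hv0
    positivity
  set a : ℝ := (inner ℝ F v : ℝ) with ha
  set K : ℝ := a ^ 2 + (1 - ‖F‖ ^ 2) * L with hK
  have hF2 : ‖F‖ ^ 2 < 1 := by nlinarith [norm_nonneg F]
  have hKa : a ^ 2 < K := by nlinarith
  have hK0 : 0 < K := lt_of_le_of_lt (sq_nonneg a) hKa
  set s : ℝ := Real.sqrt K with hs
  have hs2 : s ^ 2 = K := Real.sq_sqrt hK0.le
  have hs0 : 0 < s := Real.sqrt_pos.mpr hK0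
  have hsa : |a| < s := by
    rw [← Real.sqrt_sq_eq_abs, hs]; exact Real.sqrt_lt_sqrt (sq_nonneg a) hKa
  have hQsq : ‖Q‖ ^ 2 = ‖F‖ ^ 2 + 2 * a + L := by
    rw [hQF, norm_add_sq_real, ← ha, ← hL]
  have hQ2 : ‖Q‖ ^ 2 < 1 := by nlinarith [norm_nonneg Q]
  have hKaL : (a + L) ^ 2 < K := by nlinarith
  have hsaL : |a + L| < s := by
    rw [← Real.sqrt_sq_eq_abs, hs]; exact Real.sqrt_lt_sqrt (sq_nonneg _) hKaL
  have habs1 := abs_lt.mp hsa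
  have habs2 := abs_lt.mp hsaL
  have hden : 0 < 2 * s - L := by linarith
  set t₀ : ℝ := (s + a) / (2 * s - L) with ht
  have ht0 : 0 < t₀ := div_pos (by linarith) hden
  have ht1 : t₀ < 1 := (div_lt_one hden).mpr (by linarith)
  have hPv : (inner ℝ (F + t₀ • v) v : ℝ) = a + t₀ * L := by
    rw [inner_add_left, real_inner_smul_left, real_inner_self_eq_norm_sq, ← ha, ← hL]
  have hPn : ‖F + t₀ • v‖ ^ 2 = ‖F‖ ^ 2 + 2 * (t₀ * a) + t₀ ^ 2 * L := by
    rw [norm_add_sq_real, real_inner_smul_right, ← ha, norm_smul, Real.norm_eq_abs,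
      mul_pow, sq_abs, ← hL]
  refine ⟨t₀, ht0, ht1, ?_, ?_⟩
  · have hconv : F + t₀ • v = (1 - t₀) • F + t₀ • Q := by
      rw [hQF]; module
    rw [hconv]
    calc ‖(1 - t₀) • F + t₀ • Q‖ ≤ ‖(1 - t₀) • F‖ + ‖t₀ • Q‖ := norm_add_le _ _
      _ = (1 - t₀) * ‖F‖ + t₀ * ‖Q‖ := by
          rw [norm_smul, norm_smul, Real.norm_eq_abs, Real.norm_eq_abs,
            abs_of_pos (by linarith : (0:ℝ) < 1 - t₀), abs_of_pos ht0]
      _ < 1 := by nlinarith [norm_nonneg F, norm_nonneg Q]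
  · have hPF : F - (F + t₀ • v) = (-t₀) • v := by module
    have hQP : Q - (F + t₀ • v) = (1 - t₀) • v := by rw [hQF]; module
    have hnsm : ∀ c : ℝ, ‖c • v‖ ^ 2 = c ^ 2 * L := fun c => by
      rw [norm_smul, Real.norm_eq_abs, mul_pow, sq_abs, ← hL]
    have h1 : funkDist (F + t₀ • v) F = Real.log ((s + (a + t₀ * L)) / (s + a)) := by
      rw [funkDist, hPF, real_inner_smul_right, real_inner_smul_right, hPv, ← ha, hnsm, hPn]
      have hk1 : (-t₀ * (a + t₀ * L)) ^ 2 +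
          (1 - (‖F‖ ^ 2 + 2 * (t₀ * a) + t₀ ^ 2 * L)) * ((-t₀) ^ 2 * L) = t₀ ^ 2 * K := by
        rw [hK]; ring
      rw [hk1, show t₀ ^ 2 * K = (t₀ * s) ^ 2 by rw [mul_pow, hs2],
        Real.sqrt_sq (by positivity)]
      congr 1
      rw [show t₀ * s - -t₀ * (a + t₀ * L) = t₀ * (s + (a + t₀ * L)) by ring,
        show t₀ * s - -t₀ * a = t₀ * (s + a) by ring,
        mul_div_mul_left _ _ (ne_of_gt ht0)]
    have h2 : funkDist (F + t₀ • v) Q = Real.log ((s - (a + t₀ * L)) / (s - (a + L))) := by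
      have hQv : (inner ℝ Q v : ℝ) = a + L := by
        rw [hQF, inner_add_left, real_inner_self_eq_norm_sq, ← ha, ← hL]
      rw [funkDist, hQP, real_inner_smul_right, real_inner_smul_right, hPv, hQv, hnsm, hPn]
      have hk2 : ((1 - t₀) * (a + t₀ * L)) ^ 2 +
          (1 - (‖F‖ ^ 2 + 2 * (t₀ * a) + t₀ ^ 2 * L)) * ((1 - t₀) ^ 2 * L)
          = (1 - t₀) ^ 2 * K := by
        rw [hK]; ring
      rw [hk2, show (1 - t₀) ^ 2 * K = ((1 - t₀) * s) ^ 2 by rw [mul_pow, hs2],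
        Real.sqrt_sq (by nlinarith : (0:ℝ) ≤ (1 - t₀) * s)]
      congr 1
      rw [show (1 - t₀) * s - (1 - t₀) * (a + t₀ * L) = (1 - t₀) * (s - (a + t₀ * L)) by ring,
        show (1 - t₀) * s - (1 - t₀) * (a + L) = (1 - t₀) * (s - (a + L)) by ring,
        mul_div_mul_left _ _ (by linarith : (1:ℝ) - t₀ ≠ 0)]
    rw [h1, h2]
    congr 1
    rw [div_eq_div_iff (by linarith) (by linarith), ht]
    have hk : (s + a) / (2 * s - L) * (2 * s - L) = s + a := div_mul_cancel₀ _ hden.ne'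
    linear_combination L * hk

/-- Nonemptiness of the type-2 Funk parabola: with `Q* = (f₀/ρ(g₀,y₀), y₀)` the point of
the directrix realizing `d_F(F,s)`, some point `P = F + t₀(Q*−F)`, `t₀ ∈ (0,1)`, of the
open segment from `F` to `Q*` satisfies `d_F(P,F) = d_F(P,Q*)`. -/
theorem funk_parabola_stmt12 (y₀ f₀ g₀ : ℝ)
    (hy₀ : -1 < y₀ ∧ y₀ < 1) (hF : ‖pt f₀ g₀‖ < 1) (hgy : g₀ ≠ y₀) :
    ∃ t₀ : ℝ, 0 < t₀ ∧ t₀ < 1 ∧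
      ‖pt f₀ g₀ + t₀ • (pt (f₀ / rho g₀ y₀) y₀ - pt f₀ g₀)‖ < 1 ∧
      funkDist (pt f₀ g₀ + t₀ • (pt (f₀ / rho g₀ y₀) y₀ - pt f₀ g₀)) (pt f₀ g₀) =
        funkDist (pt f₀ g₀ + t₀ • (pt (f₀ / rho g₀ y₀) y₀ - pt f₀ g₀))
          (pt (f₀ / rho g₀ y₀) y₀) := by
  obtain ⟨hy1, hy2⟩ := hy₀
  have hF2 : f₀ ^ 2 + g₀ ^ 2 < 1 := by
    nlinarith [norm_nonneg (pt f₀ g₀), norm_pt_sq f₀ g₀]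
  have hg1 : -1 < g₀ := by nlinarith [sq_nonneg f₀]
  have hg2 : g₀ < 1 := by nlinarith [sq_nonneg f₀]
  have hQlt : (f₀ / rho g₀ y₀) ^ 2 + y₀ ^ 2 < 1 := by
    rcases hgy.lt_or_gt with hlt | hlt
    · -- g₀ < y₀, sign = -1, rho = (1-g₀)/(1-y₀)
      have hsgn : Real.sign (g₀ - y₀) = -1 := Real.sign_of_neg (by linarith)
      have hrho : rho g₀ y₀ = (1 - g₀) / (1 - y₀) := by
        rw [rho, hsgn]; ring_nf
      have hx : f₀ / rho g₀ y₀ = f₀ * (1 - y₀) / (1 - g₀) := by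
        rw [hrho, div_div_eq_mul_div]
      rw [hx]
      have key : (f₀ * (1 - y₀)) ^ 2 < (1 - y₀ ^ 2) * (1 - g₀) ^ 2 := by
        nlinarith [mul_pos (mul_pos (by linarith : (0:ℝ) < 1 - y₀) (by linarith : (0:ℝ) < 1 - g₀))
            (by linarith : (0:ℝ) < y₀ - g₀),
          mul_pos (mul_pos (by linarith : (0:ℝ) < 1 - y₀) (by linarith : (0:ℝ) < 1 - y₀))
            (by nlinarith : (0:ℝ) < 1 - g₀ ^ 2 - f₀ ^ 2)]
      have h1g : (0:ℝ) < (1 - g₀) ^ 2 := pow_pos (by linarith) 2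
      rw [div_pow]
      have := (div_lt_iff₀ h1g).mpr (show (f₀ * (1 - y₀)) ^ 2 < (1 - y₀ ^ 2) * (1 - g₀) ^ 2 from key)
      linarith
    · -- y₀ < g₀, sign = 1, rho = (1+g₀)/(1+y₀)
      have hsgn : Real.sign (g₀ - y₀) = 1 := Real.sign_of_pos (by linarith)
      have hrho : rho g₀ y₀ = (1 + g₀) / (1 + y₀) := by
        rw [rho, hsgn]; ring_nf
      have hx : f₀ / rho g₀ y₀ = f₀ * (1 + y₀) / (1 + g₀) := by
        rw [hrho, div_div_eq_mul_div]
      rw [hx]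
      have key : (f₀ * (1 + y₀)) ^ 2 < (1 - y₀ ^ 2) * (1 + g₀) ^ 2 := by
        nlinarith [mul_pos (mul_pos (by linarith : (0:ℝ) < 1 + y₀) (by linarith : (0:ℝ) < 1 + g₀))
            (by linarith : (0:ℝ) < g₀ - y₀),
          mul_pos (mul_pos (by linarith : (0:ℝ) < 1 + y₀) (by linarith : (0:ℝ) < 1 + y₀))
            (by nlinarith : (0:ℝ) < 1 - g₀ ^ 2 - f₀ ^ 2)]
      have h1g : (0:ℝ) < (1 + g₀) ^ 2 := pow_pos (by linarith) 2
      rw [div_pow]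
      have := (div_lt_iff₀ h1g).mpr (show (f₀ * (1 + y₀)) ^ 2 < (1 - y₀ ^ 2) * (1 + g₀) ^ 2 from key)
      linarith
  have hQ : ‖pt (f₀ / rho g₀ y₀) y₀‖ < 1 := by
    nlinarith [norm_nonneg (pt (f₀ / rho g₀ y₀) y₀), norm_pt_sq (f₀ / rho g₀ y₀) y₀]
  have hne : pt (f₀ / rho g₀ y₀) y₀ ≠ pt f₀ g₀ := by
    intro h
    have := congrArg (fun x => x 1) h
    simp [pt] at this
    exact hgy this.symm
  exact funk_key (pt f₀ g₀) (pt (f₀ / rho g₀ y₀) y₀) hF hQ hne
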